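/- Let a = {a_k} satisfy 1 = a_0 ≥ a_1 ≥ a_2 ≥ ... ≥ 0 with a_k → 0 and ∑_{k=0}^∞ a_k = ∞ (allowing a_1 = 1). Let u be the fundamental sequence satisfying ∑_{j=0}^{k} a_j u_{k-j} = 1 for all k ≥ 0. Then lim_{k→∞} u_k = 0. -/

import Mathlib

open Finset Filter Metric

theorem stmt_6 (a u : ℕ → ℝ) (ha0 : a 0 = 1)
    (hapos : ∀ k, 0 ≤ a k)
    (hamono : ∀ k, 1 ≤ k → a k ≤ a (k - 1))
    (halim : Tendsto a atTop (nhds 0))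
    (hadiv : ¬ Summable a)
    (hu : ∀ k, ∑ j ∈ Finset.range (k + 1), a j * u (k - j) = 1) :
    Tendsto u atTop (nhds 0) := by
  classical
  have hanti : Antitone a := antitone_nat_of_succ_le fun n => by
    simpa using hamono (n + 1) (Nat.le_add_left 1 n)
  set q : ℕ → ℝ := fun j => a j - a (j + 1) with hqdef
  have hqpos : ∀ j, 0 ≤ q j := fun j => sub_nonneg.2 (hanti (Nat.le_succ j))
  have hu0 : u 0 = 1 := by have := hu 0; simpa [ha0] using this
  have hqsum : ∀ K, ∑ j ∈ range K, q j = 1 - a K := by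
    intro K
    simpa [hqdef, ha0] using Finset.sum_range_sub' a K
  have hrec : ∀ n, u (n + 1) = ∑ j ∈ range (n + 1), q j * u (n - j) := by
    intro n
    have h1 := hu (n + 1)
    rw [Finset.sum_range_succ'] at h1
    simp only [Nat.succ_sub_succ, ha0, one_mul, Nat.sub_zero] at h1
    have h2 := hu n
    have h3 : ∑ j ∈ range (n + 1), q j * u (n - j)
        = (∑ j ∈ range (n + 1), a j * u (n - j))
          - ∑ j ∈ range (n + 1), a (j + 1) * u (n - j) := by
      rw [← Finset.sum_sub_distrib]
      exact Finset.sum_congr rfl fun j _ => by simp [hqdef]; ring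
    rw [h3, h2]
    linarith
  have hub : ∀ k, 0 ≤ u k ∧ u k ≤ 1 := by
    intro k
    induction k using Nat.strong_induction_on with
    | _ k ih =>
      match k with
      | 0 => simp [hu0]
      | (n + 1) =>
        rw [hrec n]
        constructor
        · exact Finset.sum_nonneg fun j hj =>
            mul_nonneg (hqpos j) (ih (n - j) (by omega)).1
        · calc ∑ j ∈ range (n + 1), q j * u (n - j)
              ≤ ∑ j ∈ range (n + 1), q j * 1 :=
                Finset.sum_le_sum fun j hj =>
                  mul_le_mul_of_nonneg_left (ih (n - j) (by omega)).2 (hqpos j)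
          _ = 1 - a (n + 1) := by simp [hqsum]
          _ ≤ 1 := by linarith [hapos (n + 1)]
  -- boundedness
  have hbdd : IsBoundedUnder (· ≤ ·) atTop u :=
    isBoundedUnder_of ⟨1, fun k => (hub k).2⟩
  have hbdd' : IsBoundedUnder (· ≥ ·) atTop u :=
    isBoundedUnder_of ⟨0, fun k => (hub k).1⟩
  set L := limsup u atTop with hLdef
  have hL0 : 0 ≤ L :=
    le_limsup_of_frequently_le (Frequently.of_forall fun k => (hub k).1) hbdd
  by_contra hcon
  have hLpos : 0 < L := by
    rcases lt_or_ge 0 L with h | h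
    · exact h
    · exfalso
      apply hcon
      have h0 : limsup u atTop ≤ 0 := hLdef ▸ h
      have h1 : (0:ℝ) ≤ liminf u atTop :=
        le_liminf_of_le hbdd.isCoboundedUnder_flip
          (Eventually.of_forall fun k => (hub k).1)
      exact tendsto_of_le_liminf_of_limsup_le h1 h0 hbdd hbdd'
  -- ultrafilter
  have hG : (atTop ⊓ comap u (nhds L)).NeBot := by
    rw [neBot_iff]
    intro hbot
    rw [inf_eq_bot_iff] at hbot
    obtain ⟨U, hU, V, hV, hUV⟩ := hbot
    obtain ⟨n, hn⟩ := mem_atTop_sets.1 hU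
    obtain ⟨W, hW, hWV⟩ := mem_comap.1 hV
    obtain ⟨ε, hε, hball⟩ := Metric.mem_nhds_iff.1 hW
    have hfreq : ∃ᶠ k in atTop, L - ε < u k :=
      frequently_lt_of_lt_limsup (hbdd'.isCoboundedUnder_flip) (by linarith)
    have hev : ∀ᶠ k in atTop, u k < L + ε :=
      eventually_lt_of_limsup_lt (by linarith) hbdd
    obtain ⟨k, ⟨hk1, hk2⟩, hkn⟩ := ((hfreq.and_eventually hev).and_eventually
      (eventually_ge_atTop n)).exists
    have : k ∈ U ∩ V := ⟨hn _ hkn, hWV (hball (by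
      simp only [Set.mem_preimage, Metric.mem_ball, Real.dist_eq]
      rw [abs_sub_lt_iff]; constructor <;> linarith))⟩
    rw [hUV] at this
    exact this
  set 𝒰 : Ultrafilter ℕ := @Ultrafilter.of ℕ (atTop ⊓ comap u (nhds L)) hG with h𝒰def
  have h𝒰le : (𝒰 : Filter ℕ) ≤ atTop ⊓ comap u (nhds L) := Ultrafilter.of_le _
  have h𝒰top : (𝒰 : Filter ℕ) ≤ atTop := h𝒰le.trans inf_le_left
  have hulim : Tendsto u 𝒰 (nhds L) := by
    have : (𝒰 : Filter ℕ) ≤ comap u (nhds L) := h𝒰le.trans inf_le_right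
    exact map_le_iff_le_comap.2 this
  -- the shifted limits v
  have hvex : ∀ j : ℕ, ∃ x, x ∈ Set.Icc (0:ℝ) 1 ∧
      Tendsto (fun k => u (k - j)) 𝒰 (nhds x) := by
    intro j
    have hle : (Ultrafilter.map (fun k => u (k - j)) 𝒰 : Filter ℝ) ≤ 𝓟 (Set.Icc 0 1) := by
      rw [Ultrafilter.coe_map, le_principal_iff, Filter.mem_map]
      exact Eventually.of_forall fun k => Set.mem_Icc.2 ⟨(hub (k - j)).1, (hub (k - j)).2⟩
    obtain ⟨x, hx, hxle⟩ := isCompact_Icc.ultrafilter_le_nhds _ hle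
    rw [Ultrafilter.coe_map] at hxle
    exact ⟨x, hx, hxle⟩
  choose v hvmem hvt using hvex
  have hv0 : v 0 = L := by
    have h1 : Tendsto u 𝒰 (nhds (v 0)) := by simpa using hvt 0
    exact tendsto_nhds_unique h1 hulim
  have hvle : ∀ j, v j ≤ L := by
    intro j
    refine le_of_forall_pos_le_add fun ε hε => ?_
    have hev : ∀ᶠ k in atTop, u k < L + ε := eventually_lt_of_limsup_lt (by linarith) hbdd
    obtain ⟨n, hn⟩ := eventually_atTop.1 hev
    have hev' : ∀ᶠ k in (𝒰 : Filter ℕ), u (k - j) < L + ε :=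
      h𝒰top (eventually_atTop.2 ⟨n + j, fun k hk => hn _ (by omega)⟩)
    exact le_of_tendsto (hvt j) (hev'.mono fun k hk => hk.le)
  -- pointwise main inequality
  have hpt : ∀ m N k, m + N + 1 ≤ k →
      u (k - m) ≤ (∑ j ∈ range N, q j * u (k - (m + 1 + j))) + a N := by
    intro m N k hk
    have hkm : k - m = (k - m - 1) + 1 := by omega
    set n := k - m - 1 with hndef
    have hNn : N ≤ n + 1 := by omega
    have esplit : ∑ j ∈ range (n + 1), q j * u (n - j)
        = ∑ j ∈ range N, q j * u (n - j) + ∑ j ∈ Finset.Ico N (n + 1), q j * u (n - j) := by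
      rw [Finset.range_eq_Ico, Finset.range_eq_Ico, Finset.sum_Ico_consecutive _ (Nat.zero_le N) hNn]
    have efirst : ∑ j ∈ range N, q j * u (n - j)
        = ∑ j ∈ range N, q j * u (k - (m + 1 + j)) :=
      Finset.sum_congr rfl fun j hj => by
        have : n - j = k - (m + 1 + j) := by omega
        rw [this]
    rw [hkm, hrec n, esplit, efirst]
    have e2 : ∑ j ∈ Finset.Ico N (n + 1), q j * u (n - j) ≤ a N := by
      calc ∑ j ∈ Finset.Ico N (n + 1), q j * u (n - j)
          ≤ ∑ j ∈ Finset.Ico N (n + 1), q j * 1 :=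
            Finset.sum_le_sum fun j hj =>
              mul_le_mul_of_nonneg_left (hub _).2 (hqpos j)
        _ = (1 - a (n + 1)) - (1 - a N) := by
            rw [Finset.sum_Ico_eq_sub _ hNn]
            simp [hqsum]
        _ ≤ a N := by linarith [hapos (n + 1)]
    linarith
  -- limit version
  have hV3 : ∀ m N, v m ≤ (∑ j ∈ range N, q j * v (m + 1 + j)) + a N := by
    intro m N
    have ht1 : Tendsto (fun k => u (k - m)) 𝒰 (nhds (v m)) := hvt m
    have ht2 : Tendsto (fun k => (∑ j ∈ range N, q j * u (k - (m + 1 + j))) + a N) 𝒰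
        (nhds ((∑ j ∈ range N, q j * v (m + 1 + j)) + a N)) := by
      refine Tendsto.add ?_ tendsto_const_nhds
      exact tendsto_finset_sum _ fun j _ => (hvt (m + 1 + j)).const_mul _
    refine le_of_tendsto_of_tendsto ht1 ht2 ?_
    exact h𝒰top (eventually_atTop.2 ⟨m + N + 1, fun k hk => hpt m N k hk⟩)
  -- constraint
  have hC : ∀ M, ∑ j ∈ range (M + 1), a j * v j ≤ 1 := by
    intro M
    have ht : Tendsto (fun k => ∑ j ∈ range (M + 1), a j * u (k - j)) 𝒰
        (nhds (∑ j ∈ range (M + 1), a j * v j)) :=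
      tendsto_finset_sum _ fun j _ => (hvt j).const_mul _
    refine le_of_tendsto ht ?_
    refine h𝒰top (eventually_atTop.2 ⟨M, fun k hk => ?_⟩)
    calc ∑ j ∈ range (M + 1), a j * u (k - j)
        ≤ ∑ j ∈ range (k + 1), a j * u (k - j) := by
          apply Finset.sum_le_sum_of_subset_of_nonneg
          · exact Finset.range_subset_range.2 (by omega)
          · intro j _ _; exact mul_nonneg (hapos j) (hub _).1
      _ = 1 := hu k
  -- a positive q exists
  have hqex : ∃ j0, 0 < q j0 := by
    by_contra h
    push_neg at h
    have hqz : ∀ j, q j = 0 := fun j => le_antisymm (h j) (hqpos j)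
    have hconst : ∀ j, a j = 1 := by
      intro j
      induction j with
      | zero => exact ha0
      | succ n ihn => have := hqz n; simp [hqdef] at this; linarith
    have : Tendsto a atTop (nhds 1) := by
      simp only [funext hconst]; exact (tendsto_const_nhds : Tendsto (fun _ : ℕ => (1:ℝ)) atTop _)
    have := tendsto_nhds_unique halim this
    norm_num at this
  obtain ⟨j0, hj0⟩ := hqex
  set t := j0 + 1 with htdef
  -- V4: propagation
  have hV4 : ∀ m, v m = L → v (m + t) = L := by
    intro m hm
    by_contra hne
    have hlt : v (m + t) < L := lt_of_le_of_ne (hvle _) hne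
    set δ := L - v (m + t) with hδdef
    have hδ : 0 < δ := by simp [hδdef]; linarith
    -- choose N
    have htend : Tendsto (fun N => a N * (1 - L)) atTop (nhds 0) := by
      simpa using halim.mul_const (1 - L)
    have : ∀ᶠ N in atTop, a N * (1 - L) < q j0 * δ := by
      have := htend.eventually_lt_const (mul_pos hj0 hδ)
      simpa using this
    obtain ⟨N, hN1, hN2⟩ := (this.and (eventually_ge_atTop (j0 + 1))).exists
    have h3 := hV3 m N
    have hL1 : L ≤ 1 := by
      have := (hvmem 0).2; rw [hv0] at this; exact this
    have hsum1 : ∑ j ∈ range N, q j * v (m + 1 + j)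
        ≤ (∑ j ∈ range N, q j * L) - q j0 * δ := by
      have hsingle : q j0 * δ ≤ ∑ j ∈ range N, q j * (L - v (m + 1 + j)) := by
        have hj0mem : j0 ∈ range N := Finset.mem_range.2 (by omega)
        have h5 : q j0 * (L - v (m + 1 + j0)) ≤ ∑ j ∈ range N, q j * (L - v (m + 1 + j)) :=
          Finset.single_le_sum (f := fun j => q j * (L - v (m + 1 + j)))
            (fun j _ => mul_nonneg (hqpos j) (by linarith [hvle (m + 1 + j)])) hj0mem
        have he : m + 1 + j0 = m + t := by omega
        rw [he] at h5
        rw [hδdef]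
        exact h5
      have : ∑ j ∈ range N, q j * (L - v (m + 1 + j))
          = (∑ j ∈ range N, q j * L) - ∑ j ∈ range N, q j * v (m + 1 + j) := by
        rw [← Finset.sum_sub_distrib]
        exact Finset.sum_congr rfl fun j _ => by ring
      linarith [hsingle, this ▸ hsingle]
    have hsum2 : ∑ j ∈ range N, q j * L = (1 - a N) * L := by
      rw [← Finset.sum_mul, hqsum]
    rw [hm] at h3
    nlinarith [hapos N]
  have hvt' : ∀ k : ℕ, v (k * t) = L := by
    intro k
    induction k with
    | zero => simpa using hv0
    | succ n ihn =>
      have := hV4 (n * t) ihn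
      have he : n * t + t = (n + 1) * t := by ring
      rwa [he] at this
  -- divergence
  have hdiv : Tendsto (fun n => ∑ j ∈ range n, a j) atTop atTop :=
    (not_summable_iff_tendsto_nat_atTop_of_nonneg hapos).1 hadiv
  -- block bound: t * ∑_{k<K} a (k*t) ≥ ∑_{j < K*t} a j
  have hblock : ∀ K : ℕ, ∑ j ∈ range (K * t), a j ≤ (t : ℝ) * ∑ k ∈ range K, a (k * t) := by
    intro K
    induction K with
    | zero => simp
    | succ n ihn =>
      have hsplit : ∑ j ∈ range ((n + 1) * t), a j
          = ∑ j ∈ range (n * t), a j + ∑ i ∈ range t, a (n * t + i) := by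
        have : (n + 1) * t = n * t + t := by ring
        rw [this, Finset.sum_range_add]
      have hblk : ∑ i ∈ range t, a (n * t + i) ≤ (t : ℝ) * a (n * t) := by
        calc ∑ i ∈ range t, a (n * t + i) ≤ ∑ i ∈ range t, a (n * t) :=
              Finset.sum_le_sum fun i _ => hanti (Nat.le_add_right _ _)
          _ = (t : ℝ) * a (n * t) := by simp [mul_comm]
      have hR : ∑ k ∈ range (n + 1), a (k * t)
          = (∑ k ∈ range n, a (k * t)) + a (n * t) := Finset.sum_range_succ _ n
      rw [hsplit, hR]
      linarith
  -- final contradiction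
  have hfin : ∀ K : ℕ, L * ∑ k ∈ range (K + 1), a (k * t) ≤ 1 := by
    intro K
    have hsub : (range (K + 1)).image (fun k => k * t) ⊆ range (K * t + 1) := by
      intro x hx
      obtain ⟨k, hk, rfl⟩ := Finset.mem_image.1 hx
      rw [Finset.mem_range] at hk ⊢
      have : k ≤ K := by omega
      calc k * t ≤ K * t := Nat.mul_le_mul_right t this
        _ < K * t + 1 := by omega
    have hinj : Set.InjOn (fun k => k * t) (range (K + 1)) := fun x _ y _ h => by
      have ht1 : 1 ≤ t := by omega
      simpa [Nat.mul_left_inj (by omega : t ≠ 0)] using h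
    calc L * ∑ k ∈ range (K + 1), a (k * t)
        = ∑ k ∈ range (K + 1), a (k * t) * v (k * t) := by
          rw [Finset.mul_sum]
          exact Finset.sum_congr rfl fun k _ => by rw [hvt' k]; ring
      _ = ∑ j ∈ (range (K + 1)).image (fun k => k * t), a j * v j := by
          rw [Finset.sum_image hinj]
      _ ≤ ∑ j ∈ range (K * t + 1), a j * v j := by
          apply Finset.sum_le_sum_of_subset_of_nonneg hsub
          intro j _ _
          exact mul_nonneg (hapos j) (hvmem j).1
      _ ≤ 1 := hC (K * t)
  -- derive boundedness of partial sums, contradiction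
  obtain ⟨n, hn⟩ := (hdiv.eventually_gt_atTop ((t : ℝ) / L)).exists
  have hK := hfin n
  have hble := hblock (n + 1)
  have hmono : ∑ j ∈ range n, a j ≤ ∑ j ∈ range ((n + 1) * t), a j := by
    apply Finset.sum_le_sum_of_subset_of_nonneg
    · refine Finset.range_subset_range.2 ?_
      have : 1 ≤ t := by omega
      nlinarith
    · intro j _ _; exact hapos j
  have htpos : (0:ℝ) < (t:ℝ) := by positivity
  have hS : (t:ℝ) / L < (t:ℝ) * ∑ k ∈ range (n + 1), a (k * t) := by linarith
  have hS' : (t:ℝ) < ((t:ℝ) * ∑ k ∈ range (n + 1), a (k * t)) * L :=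
    (div_lt_iff₀ hLpos).1 hS
  nlinarith [hK, hS', htpos, hLpos]
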